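/- Let f : ℝⁿ → ℝ be locally Lipschitz and path differentiable, and let γ : [a,b] → ℝⁿ be a Lipschitz curve with −γ'(t) ∈ ∂ᶜf(γ(t)) for a.e. t. If f(γ(b)) ≥ f(γ(a)), then γ'(t) = 0 for almost every t, and hence γ is constant. -/

import Mathlib

open MeasureTheory Filter
open Set Topology

/-- A locally Lipschitz real function is Lipschitz on any compact interval. -/
lemma locallyLipschitz_lipschitzOnWith_Icc {h : ℝ → ℝ} (hh : LocallyLipschitz h)
    (a b : ℝ) : ∃ K : NNReal, LipschitzOnWith K h (Set.Icc a b) := by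
  have hc : Continuous h := hh.continuous
  choose Kf Uf hU hL using hh
  set Vf : ℝ → Set ℝ := fun x => interior (Uf x) with hVf
  have hVnhds : ∀ x ∈ Icc a b, Vf x ∈ 𝓝 x := fun x _ =>
    (interior_mem_nhds).2 (hU x)
  obtain ⟨t, hcov⟩ := isCompact_Icc.elim_nhds_subcover' (fun x _ => Vf x)
    (fun x hx => hVnhds x hx)
  set K : NNReal := t.sup (fun x => Kf x) with hK
  have hKle : ∀ x ∈ t, Kf (x : ℝ) ≤ K := fun x hx => by exact Finset.le_sup (f := fun y : (Set.Icc a b) => Kf (y : ℝ)) hx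
  have key : ∀ u ∈ Icc a b, ∀ v ∈ Icc a b, u ≤ v → |h v - h u| ≤ K * (v - u) := by
    intro u hu v hv huv
    set s : Set ℝ := {w | |h w - h u| ≤ K * (w - u)} with hs
    have hclosed : IsClosed s := by
      have : s = {w | |h w - h u| - K * (w - u) ≤ 0} := by ext w; simp [hs, sub_nonpos]
      rw [this]
      apply isClosed_le _ continuous_const
      exact ((hc.sub continuous_const).abs.sub
        (continuous_const.mul (continuous_id.sub continuous_const)))
    have : Icc u v ⊆ s := by
      apply (hclosed.inter isClosed_Icc).Icc_subset_of_forall_mem_nhdsWithin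
      · simp [hs]
      · rintro x ⟨hxs, hxuv⟩
        have hxab : x ∈ Icc a b := ⟨hu.1.trans hxuv.1, hxuv.2.le.trans hv.2⟩
        obtain ⟨x₀, hx₀t, hxV⟩ : ∃ x₀ ∈ t, x ∈ Vf x₀ := by
          have := hcov hxab
          simpa using this
        have hWnhds : Vf (x₀ : ℝ) ∈ 𝓝 x := (isOpen_interior).mem_nhds hxV
        have : Vf (x₀ : ℝ) ∩ Ioi x ∈ 𝓝[>] x :=
          Filter.inter_mem (mem_nhdsWithin_of_mem_nhds hWnhds) self_mem_nhdsWithin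
        filter_upwards [this] with w ⟨hwV, hwx⟩
        have hdist : dist (h w) (h x) ≤ Kf (x₀:ℝ) * dist w x :=
          (hL (x₀:ℝ)).mono interior_subset |>.dist_le_mul w hwV x hxV
        have h1 : |h w - h x| ≤ K * (w - x) := by
          rw [Real.dist_eq, Real.dist_eq] at hdist
          calc |h w - h x| ≤ Kf (x₀:ℝ) * |w - x| := hdist
            _ ≤ K * (w - x) := by
                rw [abs_of_pos (by linarith [hwx.out] : (0:ℝ) < w - x)]
                have hKK : (Kf (x₀:ℝ) : ℝ) ≤ (K : ℝ) := by exact_mod_cast hKle x₀ hx₀t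
                exact mul_le_mul_of_nonneg_right hKK (by linarith [hwx.out])
        calc |h w - h u| ≤ |h w - h x| + |h x - h u| := abs_sub_le _ _ _
          _ ≤ K * (w - x) + K * (x - u) := add_le_add h1 hxs
          _ = K * (w - u) := by ring
    exact (this ⟨huv, le_rfl⟩ : v ∈ s)
  refine ⟨K, LipschitzOnWith.of_dist_le_mul fun x hx y hy => ?_⟩
  rcases le_total x y with hxy | hxy
  · rw [Real.dist_eq, Real.dist_eq, abs_sub_comm (h x), abs_of_nonpos (by linarith : x - y ≤ 0)]
    calc |h y - h x| ≤ K * (y - x) := key x hx y hy hxy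
      _ = K * -(x - y) := by ring
  · rw [Real.dist_eq, Real.dist_eq, abs_of_nonneg (by linarith : (0:ℝ) ≤ x - y)]
    calc |h x - h y| ≤ K * (x - y) := key y hy x hx hxy

lemma ftc_ineq {g g' : ℝ → ℝ} {a b : ℝ} (hab : a ≤ b) {L : NNReal}
    (hg : LipschitzWith L g)
    (hder : ∀ᵐ t : ℝ, t ∈ Set.Ioo a b → HasDerivAt g (g' t) t)
    (hint : IntervalIntegrable g' volume a b) :
    g b - g a ≤ ∫ t in a..b, g' t := by
  set m : ℝ → ℝ := fun t => L * t - g t with hm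
  have hmc : Continuous m := (continuous_const.mul continuous_id).sub hg.continuous
  have hmono : Monotone m := by
    intro s t hst
    have h1 := hg.dist_le_mul t s
    rw [Real.dist_eq, Real.dist_eq, abs_of_nonneg (sub_nonneg.2 hst)] at h1
    have h2 : g t - g s ≤ L * (t - s) := (abs_le.1 h1).2
    simp only [hm]
    nlinarith
  set μ := hmono.stieltjesFunction.measure with hμ
  haveI : SigmaFinite μ := by infer_instance
  set D : ℝ → ℝ := fun x => (μ.rnDeriv volume x).toReal with hD
  have hDer : ∀ᵐ x : ℝ, HasDerivAt m (D x) x := hmono.ae_hasDerivAt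
  have hsF : ∀ x, hmono.stieltjesFunction x = m x := by
    intro x
    rw [hmono.stieltjesFunction_eq]
    exact rightLim_eq_of_tendsto (h := nhdsGT_neBot x)
      ((hmc.tendsto x).mono_left nhdsWithin_le_nhds)
  have hμIoc : μ (Ioc a b) = ENNReal.ofReal (m b - m a) := by
    rw [hμ, StieltjesFunction.measure_Ioc, hsF, hsF]
  have hb_ne : ∀ᵐ t : ℝ, t ≠ b := by
    rw [ae_iff]
    simpa using Real.volume_singleton (x := b)
  have hDeq : ∀ᵐ t ∂(volume.restrict (Ioc a b)), D t = (L : ℝ) - g' t := by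
    rw [ae_restrict_iff' measurableSet_Ioc]
    filter_upwards [hder, hDer, hb_ne] with t ht hDt hbt htIoc
    have htIoo : t ∈ Ioo a b := ⟨htIoc.1, lt_of_le_of_ne htIoc.2 hbt⟩
    have h1 : HasDerivAt m ((L : ℝ) - g' t) t := by
      have h := ((hasDerivAt_id t).const_mul (L : ℝ)).sub (ht htIoo)
      rw [mul_one] at h
      exact h
    exact hDt.unique h1
  have hintL : IntervalIntegrable (fun t => (L : ℝ) - g' t) volume a b :=
    (intervalIntegrable_const).sub hint
  have hcongr : ∫ t in a..b, ((L : ℝ) - g' t) = ∫ t in a..b, D t := by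
    rw [intervalIntegral.integral_of_le hab, intervalIntegral.integral_of_le hab]
    exact integral_congr_ae (hDeq.mono fun t ht => ht.symm)
  have hDle : ∫ t in a..b, D t ≤ m b - m a := by
    rw [intervalIntegral.integral_of_le hab]
    have h1 : ∫ t in Ioc a b, D t = (∫⁻ t in Ioc a b, μ.rnDeriv volume t).toReal := by
      apply integral_toReal (μ.measurable_rnDeriv volume).aemeasurable
      exact ae_restrict_of_ae (μ.rnDeriv_lt_top volume)
    rw [h1]
    have h2 : (∫⁻ t in Ioc a b, μ.rnDeriv volume t) ≤ μ (Ioc a b) :=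
      Measure.setLIntegral_rnDeriv_le _
    have h3 : μ (Ioc a b) ≠ ⊤ := by rw [hμIoc]; exact ENNReal.ofReal_ne_top
    calc (∫⁻ t in Ioc a b, μ.rnDeriv volume t).toReal ≤ (μ (Ioc a b)).toReal :=
          ENNReal.toReal_mono h3 h2
      _ = m b - m a := by rw [hμIoc, ENNReal.toReal_ofReal (sub_nonneg.2 (hmono hab))]
  have hsplit : ∫ t in a..b, ((L : ℝ) - g' t) = (L : ℝ) * (b - a) - ∫ t in a..b, g' t := by
    rw [intervalIntegral.integral_sub intervalIntegrable_const hint,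
      intervalIntegral.integral_const, smul_eq_mul]
    ring
  have hmb : m b - m a = (L : ℝ) * (b - a) - (g b - g a) := by simp only [hm]; ring
  rw [hsplit] at hcongr
  linarith [hcongr ▸ hDle]

/-- The Clarke subdifferential of `f : ℝⁿ → ℝ`: the closed convex hull of all limits of
gradients of `f` at nearby differentiability points. -/
noncomputable def clarkeSubdiff {n : ℕ} (f : EuclideanSpace ℝ (Fin n) → ℝ)
    (x : EuclideanSpace ℝ (Fin n)) : Set (EuclideanSpace ℝ (Fin n)) :=
  closure (convexHull ℝ
    {v | ∃ y : ℕ → EuclideanSpace ℝ (Fin n),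
      (∀ k, DifferentiableAt ℝ f (y k)) ∧
      Tendsto y atTop (nhds x) ∧
      Tendsto (fun k => gradient f (y k)) atTop (nhds v)})

/-- `f` is path differentiable: along every Lipschitz curve `γ`, for a.e. `t` the curve
is differentiable at `t`, and `f ∘ γ` is differentiable at `t` with derivative
`⟪v, γ′(t)⟫` for every Clarke subgradient `v ∈ ∂ᶜf(γ t)`. -/
def PathDifferentiable {n : ℕ} (f : EuclideanSpace ℝ (Fin n) → ℝ) : Prop :=
  ∀ (γ : ℝ → EuclideanSpace ℝ (Fin n)) (K : NNReal), LipschitzWith K γ →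
    ∀ᵐ t : ℝ, ∃ d : EuclideanSpace ℝ (Fin n), HasDerivAt γ d t ∧
      ∀ v ∈ clarkeSubdiff f (γ t), HasDerivAt (f ∘ γ) (inner ℝ v d : ℝ) t

/-- If `f` is locally Lipschitz and path differentiable, `γ : [a,b] → ℝⁿ`
is Lipschitz with `−γ′(t) ∈ ∂ᶜf(γ t)` a.e., and `f(γ b) ≥ f(γ a)`, then `γ′ = 0` a.e. on
`[a,b]` and `γ` is constant on `[a,b]`. -/
theorem stmt8 {n : ℕ} (f : EuclideanSpace ℝ (Fin n) → ℝ)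
    (hf_lip : LocallyLipschitz f) (hf_pd : PathDifferentiable f)
    (a b : ℝ) (hab : a ≤ b)
    (γ γ' : ℝ → EuclideanSpace ℝ (Fin n)) (K : NNReal) (hγ : LipschitzWith K γ)
    (hder : ∀ᵐ t : ℝ, t ∈ Set.Icc a b →
      HasDerivAt γ (γ' t) t ∧ -γ' t ∈ clarkeSubdiff f (γ t))
    (hval : f (γ a) ≤ f (γ b)) :
    (∀ᵐ t : ℝ, t ∈ Set.Icc a b → γ' t = 0) ∧
      ∀ s ∈ Set.Icc a b, ∀ t ∈ Set.Icc a b, γ s = γ t := by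
  set g : ℝ → ℝ := f ∘ γ with hg
  have hgl : LocallyLipschitz g := hf_lip.comp hγ.locallyLipschitz
  obtain ⟨L, hLon⟩ := locallyLipschitz_lipschitzOnWith_Icc hgl a b
  obtain ⟨G, hGlip, hGeq⟩ := hLon.extend_real
  set ψ : ℝ → ℝ := fun t => -‖γ' t‖ ^ 2 with hψ
  -- the chain rule along γ, a.e. on [a, b]
  have hchain : ∀ᵐ t : ℝ, t ∈ Set.Icc a b →
      HasDerivAt g (ψ t) t ∧ ‖γ' t‖ ≤ K := by
    filter_upwards [hf_pd γ K hγ, hder] with t hpd ht htIcc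
    obtain ⟨d, hd, hch⟩ := hpd
    obtain ⟨hγ't, hclark⟩ := ht htIcc
    have hdd : d = γ' t := hd.unique hγ't
    subst hdd
    constructor
    · have := hch (-γ' t) hclark
      have hin : (inner ℝ (-γ' t) (γ' t) : ℝ) = ψ t := by
        rw [inner_neg_left, real_inner_self_eq_norm_sq, hψ]
      rwa [hin] at this
    · have h1 := hd.hasFDerivAt.le_of_lipschitz hγ
      have h2 : γ' t = (ContinuousLinearMap.smulRight (1 : ℝ →L[ℝ] ℝ) (γ' t)) 1 := by
        simp
      calc ‖γ' t‖ = ‖(ContinuousLinearMap.smulRight (1 : ℝ →L[ℝ] ℝ) (γ' t)) 1‖ := by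
            rw [← h2]
        _ ≤ ‖ContinuousLinearMap.smulRight (1 : ℝ →L[ℝ] ℝ) (γ' t)‖ * ‖(1 : ℝ)‖ :=
            ContinuousLinearMap.le_opNorm _ _
        _ ≤ K := by simpa using h1
  -- transfer to the globally Lipschitz extension G
  have hGder : ∀ᵐ t : ℝ, t ∈ Set.Ioo a b → HasDerivAt G (ψ t) t := by
    filter_upwards [hchain] with t ht htIoo
    have h1 : HasDerivAt g (ψ t) t := (ht (Set.Ioo_subset_Icc_self htIoo)).1
    apply h1.congr_of_eventuallyEq
    filter_upwards [Icc_mem_nhds htIoo.1 htIoo.2] with u hu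
    exact (hGeq hu).symm
  -- integrability of ψ
  have hψm : ∀ᵐ t ∂(volume.restrict (Set.Ioc a b)), ψ t = deriv G t := by
    rw [ae_restrict_iff' measurableSet_Ioc]
    have hb_ne : ∀ᵐ t : ℝ, t ≠ b := by
      rw [ae_iff]; simpa using Real.volume_singleton (x := b)
    filter_upwards [hGder, hb_ne] with t ht hbt htIoc
    exact ((ht ⟨htIoc.1, lt_of_le_of_ne htIoc.2 hbt⟩).deriv).symm
  have hψbd : ∀ᵐ t ∂(volume.restrict (Set.Ioc a b)), ‖ψ t‖ ≤ (K : ℝ) ^ 2 := by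
    rw [ae_restrict_iff' measurableSet_Ioc]
    filter_upwards [hchain] with t ht htIoc
    have := (ht (Set.Ioc_subset_Icc_self htIoc)).2
    rw [hψ]
    simp only [norm_neg, norm_pow, norm_norm]
    exact pow_le_pow_left₀ (norm_nonneg _) this 2
  have hψint : IntervalIntegrable ψ volume a b := by
    rw [intervalIntegrable_iff_integrableOn_Ioc_of_le hab]
    apply Integrable.mono' (show IntegrableOn (fun _ : ℝ => (K : ℝ) ^ 2) (Set.Ioc a b) volume from
      integrableOn_const measure_Ioc_lt_top.ne)
    · exact ((measurable_deriv G).aestronglyMeasurable).congr (hψm.mono fun t ht => ht.symm)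
    · exact hψbd
  -- the FTC inequality gives 0 ≤ ∫ ψ
  have hftc : G b - G a ≤ ∫ t in a..b, ψ t := ftc_ineq hab hGlip hGder hψint
  rw [← hGeq (Set.left_mem_Icc.2 hab), ← hGeq (Set.right_mem_Icc.2 hab)] at hftc
  have hint_nonneg : 0 ≤ ∫ t in a..b, ψ t := le_trans (by simpa [hg] using sub_nonneg.2 hval) hftc
  -- conclude ψ = 0 a.e.
  have hψ0 : ∀ᵐ t ∂(volume.restrict (Set.Ioc a b)), ψ t = 0 := by
    have hnegint : IntegrableOn (fun t => -ψ t) (Set.Ioc a b) volume :=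
      ((intervalIntegrable_iff_integrableOn_Ioc_of_le hab).1 hψint).neg
    have h1 : ∫ t in Set.Ioc a b, (-ψ t) = 0 := by
      have h2 : ∫ t in Set.Ioc a b, (-ψ t) ≤ 0 := by
        rw [integral_neg]
        rw [intervalIntegral.integral_of_le hab] at hint_nonneg
        linarith
      have h3 : 0 ≤ ∫ t in Set.Ioc a b, (-ψ t) := by
        apply integral_nonneg
        intro t; simp only [hψ, neg_neg]; positivity
      linarith
    have h4 := (integral_eq_zero_iff_of_nonneg (fun t => by simp only [hψ, neg_neg]; positivity) hnegint).1 h1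
    filter_upwards [h4] with t ht
    simpa using ht
  have hae : ∀ᵐ t : ℝ, t ∈ Set.Icc a b → γ' t = 0 := by
    have h5 : ∀ᵐ t : ℝ, t ∈ Set.Ioc a b → γ' t = 0 := by
      rw [← ae_restrict_iff' measurableSet_Ioc]
      filter_upwards [hψ0] with t ht
      simp only [hψ] at ht
      have : ‖γ' t‖ = 0 := by nlinarith [norm_nonneg (γ' t), sq_nonneg ‖γ' t‖]
      simpa using this
    have ha_ne : ∀ᵐ t : ℝ, t ≠ a := by
      rw [ae_iff]; simpa using Real.volume_singleton (x := a)
    filter_upwards [h5, ha_ne] with t ht hat htIcc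
    exact ht ⟨lt_of_le_of_ne htIcc.1 (Ne.symm hat), htIcc.2⟩
  refine ⟨hae, ?_⟩
  -- constancy
  have hconst : ∀ s ∈ Set.Icc a b, ∀ t ∈ Set.Icc a b, s ≤ t → γ s = γ t := by
    intro s hs t ht hst
    set v := γ t - γ s with hv
    have key : ∀ w : EuclideanSpace ℝ (Fin n),
        (inner ℝ w (γ t) : ℝ) - inner ℝ w (γ s) ≤ 0 := by
      intro w
      set c : ℝ → ℝ := fun u => inner ℝ w (γ u) with hc
      have hclip : LipschitzWith (‖innerSL ℝ w‖₊ * K) c :=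
        ((innerSL ℝ w).lipschitz).comp hγ
      have hcder : ∀ᵐ u : ℝ, u ∈ Set.Ioo s t → HasDerivAt c 0 u := by
        filter_upwards [hder, hae] with u hu hz huIoo
        have huIcc : u ∈ Set.Icc a b :=
          ⟨hs.1.trans huIoo.1.le, huIoo.2.le.trans ht.2⟩
        have h1 : HasDerivAt γ 0 u := by
          have := (hu huIcc).1
          rwa [hz huIcc] at this
        have := (innerSL ℝ w).hasFDerivAt.comp_hasDerivAt u h1
        simp at this
        exact this
      have := ftc_ineq hst hclip hcder intervalIntegrable_const
      simpa using this
    have h1 := key v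
    have h2 := key (-v)
    rw [inner_neg_left, inner_neg_left] at h2
    have h3 : (inner ℝ v (γ t) : ℝ) - inner ℝ v (γ s) = 0 := by linarith
    rw [← inner_sub_right, ← hv] at h3
    have : v = 0 := inner_self_eq_zero.1 h3
    rw [hv, sub_eq_zero] at this
    exact this.symm
  intro s hs t ht
  rcases le_total s t with hst | hst
  · exact hconst s hs t ht hst
  · exact (hconst t ht s hs hst).symm
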